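/- If a 19-vertex configuration (h,v) on ℤ² satisfies the 19-vertex rule at every vertex, then a height function for it exists: there is a function g : ℤ² → ℤ on the dual lattice such that g(x+1,y) - g(x,y) = v(x+1,y) and g(x,y+1) - g(x,y) = -h(x,y+1) for all (x,y) ∈ ℤ². -/

import Mathlib

/-- Discrete antiderivative on ℤ: `prim d n` is the sum of `d` over `1..n`
(with the natural signed convention for negative `n`). -/
def prim (d : ℤ → ℤ) (n : ℤ) : ℤ :=
  (Finset.range n.toNat).sum (fun i => d (i + 1))
    - (Finset.range (-n).toNat).sum (fun i => d (-i))

lemma prim_zero (d : ℤ → ℤ) : prim d 0 = 0 := by simp [prim]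

lemma prim_succ (d : ℤ → ℤ) (n : ℤ) : prim d (n + 1) - prim d n = d (n + 1) := by
  rcases le_or_gt 0 n with hn | hn
  · have h1 : (n + 1).toNat = n.toNat + 1 := by omega
    have h2 : (-(n + 1)).toNat = 0 := by omega
    have h3 : (-n).toNat = 0 := by omega
    have h4 : ((n.toNat : ℤ) + 1) = n + 1 := by omega
    have h5 : (-1 + -n).toNat = 0 := by omega
    have h6 : n ⊔ 0 = n := by omega
    simp [prim, h1, h2, h3, h5, h6, Finset.sum_range_succ, h4]
  · have h1 : (n + 1).toNat = 0 := by omega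
    have h2 : n.toNat = 0 := by omega
    have h3 : (-n).toNat = (-(n + 1)).toNat + 1 := by omega
    have h4 : -(((-(n + 1)).toNat : ℤ)) = n + 1 := by omega
    simp only [prim, h1, h2, h3, Finset.sum_range_succ]
    have h5 : -(((-(n + 1)).toNat : ℤ)) = n + 1 := h4
    simp only [Finset.sum_range_zero]
    rw [show (-(((-(n+1)).toNat : ℤ))) = n + 1 from h4]
    ring

theorem height_function_exists (h v : ℤ × ℤ → ℤ)
    (hh : ∀ p : ℤ × ℤ, h p ∈ ({-1, 0, 1} : Set ℤ))
    (hv : ∀ p : ℤ × ℤ, v p ∈ ({-1, 0, 1} : Set ℤ))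
    (rule : ∀ x y : ℤ, h (x - 1, y) + v (x, y - 1) - h (x, y) - v (x, y) = 0) :
    ∃ g : ℤ × ℤ → ℤ,
      (∀ x y : ℤ, g (x + 1, y) - g (x, y) = v (x + 1, y)) ∧
      (∀ x y : ℤ, g (x, y + 1) - g (x, y) = -h (x, y + 1)) := by
  set S : ℤ → ℤ := prim (fun i => v (i, 0)) with hS
  set T : ℤ → ℤ → ℤ := fun x => prim (fun j => -h (x, j)) with hT
  refine ⟨fun p => S p.1 + T p.1 p.2, ?_, ?_⟩
  · intro x y
    have key : ∀ y : ℤ, T (x + 1) y - T x y = v (x + 1, y) - v (x + 1, 0) := by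
      intro y
      induction y using Int.induction_on with
      | zero => simp [hT, prim_zero]
      | succ k ih =>
        have p1 := prim_succ (fun j => -h (x + 1, j)) k
        have p2 := prim_succ (fun j => -h (x, j)) k
        have r := rule (x + 1) ((k : ℤ) + 1)
        simp only [add_sub_cancel_right] at r
        simp only [hT] at *
        linarith
      | pred k ih =>
        have p1 := prim_succ (fun j => -h (x + 1, j)) (-(k : ℤ) - 1)
        have p2 := prim_succ (fun j => -h (x, j)) (-(k : ℤ) - 1)
        have e : (-(k : ℤ) - 1) + 1 = -(k : ℤ) := by ring
        rw [e] at p1 p2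
        have r := rule (x + 1) (-(k : ℤ))
        simp only [add_sub_cancel_right] at r
        simp only [hT] at *
        linarith
    have hs := prim_succ (fun i => v (i, 0)) x
    have hk := key y
    simp only [hS, hT] at *
    linarith
  · intro x y
    have := prim_succ (fun j => -h (x, j)) y
    simp only [hT] at *
    linarith
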